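/- Let E be a real inner product space and let L : E → E be a linear map that is symmetric (⟪L h, k⟫ = ⟪h, L k⟫ for all h, k) and bijective. Let P, Q : E → E be linear maps with P + Q = id_E and P ∘ P = P, and suppose P*, Q* : E → E are linear maps satisfying the adjoint relations ⟪P* h, k⟫ = ⟪h, P k⟫ and ⟪Q* h, k⟫ = ⟪h, Q k⟫ for all h, k ∈ E. Define G(h,k) := ⟪L h, k⟫. Then the following are equivalent: (a) the range of P is G-orthogonal to the range of Q, i.e. G(P h, Q k) = 0 for all h, k ∈ E; (b) there exists a bijective linear map L̃ : E → E such that L = P* ∘ L̃ ∘ P + Q* ∘ L̃ ∘ Q. -/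

import Mathlib

/-- Abstract decomposition theorem: for a symmetric bijective inertia operator `L`
on a real inner product space `E`, and complementary projections `P, Q` with
adjoints `Pstar, Qstar`, the splitting determined by `P, Q` is orthogonal for the
bilinear form `G(h,k) = ⟪L h, k⟫` iff `L = P* ∘ L̃ ∘ P + Q* ∘ L̃ ∘ Q` for some
bijective linear map `L̃`. -/
theorem decomposition_theorem {E : Type*} [NormedAddCommGroup E] [InnerProductSpace ℝ E]
    (L : E →ₗ[ℝ] E)
    (hLsymm : ∀ h k : E, (inner ℝ (L h) k : ℝ) = inner ℝ h (L k))
    (hLbij : Function.Bijective L)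
    (P Q Pstar Qstar : E →ₗ[ℝ] E)
    (hPQ : P + Q = LinearMap.id)
    (hPproj : P ∘ₗ P = P)
    (hPadj : ∀ h k : E, (inner ℝ (Pstar h) k : ℝ) = inner ℝ h (P k))
    (hQadj : ∀ h k : E, (inner ℝ (Qstar h) k : ℝ) = inner ℝ h (Q k)) :
    (∀ h k : E, (inner ℝ (L (P h)) (Q k) : ℝ) = 0) ↔
      ∃ Lt : E →ₗ[ℝ] E, Function.Bijective Lt ∧
        L = Pstar ∘ₗ Lt ∘ₗ P + Qstar ∘ₗ Lt ∘ₗ Q := by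
  have hsum : ∀ x : E, P x + Q x = x := fun x => LinearMap.congr_fun hPQ x
  have hPP : ∀ x : E, P (P x) = P x := fun x => LinearMap.congr_fun hPproj x
  have hQdef : ∀ x : E, Q x = x - P x := fun x => eq_sub_of_add_eq' (hsum x)
  have hPQ0 : ∀ x : E, P (Q x) = 0 := fun x => by
    rw [hQdef, map_sub, hPP, sub_self]
  have hQP0 : ∀ x : E, Q (P x) = 0 := fun x => by
    rw [hQdef, hPP, sub_self]
  constructor
  · intro hG
    refine ⟨L, hLbij, ?_⟩
    apply LinearMap.ext; intro h
    apply ext_inner_right ℝ; intro k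
    simp only [LinearMap.add_apply, LinearMap.comp_apply, inner_add_left, hPadj, hQadj]
    have hk := hsum k
    have hh := hsum h
    have expand : (inner ℝ (L h) k : ℝ)
        = inner ℝ (L (P h)) (P k) + inner ℝ (L (P h)) (Q k)
          + inner ℝ (L (Q h)) (P k) + inner ℝ (L (Q h)) (Q k) := by
      conv_lhs => rw [← hh, ← hk]
      simp [map_add, inner_add_left, inner_add_right]
      ring
    have cross2 : (inner ℝ (L (Q h)) (P k) : ℝ) = 0 := by
      rw [hLsymm, real_inner_comm]
      exact hG k h
    rw [expand, hG h k, cross2]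
    ring
  · rintro ⟨Lt, hbij, hL⟩ h k
    rw [hL]
    simp only [LinearMap.add_apply, LinearMap.comp_apply, inner_add_left, hPadj, hQadj,
      hPP, hQP0, map_zero, inner_zero_left, hPQ0, inner_zero_right]
    ring
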